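/- (Decay of detail coefficients.) Let f : ℝ → ℝ be differentiable and bounded with bounded derivative, let J ∈ ℕ, and let c^{(J)} be its samples on the dyadic grid, c^{(J)}_j = f(2^{−J} j) for j ∈ ℤ. For each ℓ = 1,…,J let α^{(ℓ)} : ℤ → ℝ be a finitely supported mask with Σ_{i∈ℤ} α^{(ℓ)}_{2i} = Σ_{i∈ℤ} α^{(ℓ)}_{2i+1} = 1, and let ζ^{(ℓ)} : ℤ → ℝ be absolutely summable with Σ_{i∈ℤ} ζ^{(ℓ)}_i = 1 and K_{ζ^{(ℓ)}} := 2 Σ_{i∈ℤ} |ζ^{(ℓ)}_i|·|i| < ∞. Define the multiscale transform by c^{(ℓ−1)} = D_{ζ^{(ℓ)}} c^{(ℓ)} and d^{(ℓ)} = c^{(ℓ)} − S_{α^{(ℓ)}} c^{(ℓ−1)} for ℓ = J,…,1. Then for every ℓ = 1,…,J: ‖d^{(ℓ)}‖_∞ ≤ ( K_{α^{(ℓ)},ζ^{(ℓ)}} · ‖f′‖_∞ · ‖ζ^{(ℓ)}‖₁^{−1} · ∏_{m=ℓ}^{J} ‖ζ^{(m)}‖₁ ) · 2^{−ℓ}, where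 K_{α^{(ℓ)},ζ^{(ℓ)}} = K_{ζ^{(ℓ)}}·‖α^{(ℓ)}‖₁ + K_{α^{(ℓ)}}·‖ζ^{(ℓ)}‖₁ and K_c := 2 Σ_{i∈ℤ} |c_i|·|i| for a sequence c. -/

import Mathlib

noncomputable section

/-- Sup norm of a bi-infinite real sequence. -/
def supNorm (c : ℤ → ℝ) : ℝ := ⨆ j, |c j|

/-- Supremum of absolute first differences. -/
def deltaSup (c : ℤ → ℝ) : ℝ := ⨆ j, |c (j + 1) - c j|

/-- ℓ¹ norm of a sequence. -/
def l1Norm (a : ℤ → ℝ) : ℝ := ∑' i, |a i|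

/-- The constant K_a = 2 Σ |a_i|·|i|. -/
def Kc (a : ℤ → ℝ) : ℝ := 2 * ∑' i : ℤ, |a i| * |(i : ℝ)|

/-- Subdivision operator (S_α c)_j = Σ_i α_{j-2i} c_i. -/
def subdiv (α c : ℤ → ℝ) : ℤ → ℝ := fun j => ∑' i, α (j - 2 * i) * c i

/-- Decimation operator (D_ζ c)_j = Σ_i ζ_{j-i} c_{2i}. -/
def decim (ζ c : ℤ → ℝ) : ℤ → ℝ := fun j => ∑' i, ζ (j - i) * c (2 * i)

/-- Telescoping estimate. -/
lemma dcd_tele (c : ℤ → ℝ) (B : ℝ) (h : ∀ j : ℤ, |c (j+1) - c j| ≤ B) :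
    ∀ a b : ℤ, |c a - c b| ≤ |((a : ℝ) - b)| * B := by
  have aux : ∀ (n : ℕ) (b : ℤ), |c (b + n) - c b| ≤ n * B := by
    intro n
    induction n with
    | zero => intro b; simp
    | succ n ih =>
      intro b
      have h1 : |c (b + (n+1:ℕ)) - c (b + n)| ≤ B := by
        have := h (b + n)
        have e : b + ((n:ℤ)+1) = b + (n:ℤ) + 1 := by ring
        simpa [e] using this
      calc |c (b + (n+1:ℕ)) - c b|
          ≤ |c (b + (n+1:ℕ)) - c (b + n)| + |c (b + n) - c b| := abs_sub_le _ _ _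
        _ ≤ B + n * B := add_le_add h1 (ih b)
        _ = (n+1:ℕ) * B := by push_cast; ring
  have main : ∀ a b : ℤ, b ≤ a → |c a - c b| ≤ |((a : ℝ) - b)| * B := by
    intro a b hba
    set n : ℕ := (a - b).toNat with hn
    have hcast : (n : ℤ) = a - b := Int.toNat_of_nonneg (by omega)
    have ha : a = b + n := by omega
    have habs : |((a : ℝ) - b)| = (n : ℝ) := by
      have h2 : ((a : ℝ) - b) = (n : ℝ) := by
        have := congrArg (fun z : ℤ => (z : ℝ)) hcast
        push_cast at this ⊢
        linarith
      rw [h2, abs_of_nonneg (by positivity)]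
    rw [habs, ha]
    exact aux n b
  intro a b
  rcases le_total b a with hba | hab
  · exact main a b hba
  · rw [abs_sub_comm, abs_sub_comm ((a:ℝ)) _]
    exact main b a hab

lemma dcd_summable_of_abs {g : ℤ → ℝ} (h : Summable (fun i => |g i|)) : Summable g :=
  Summable.of_norm (by simpa [Real.norm_eq_abs] using h)

lemma dcd_abs_tsum_le {g h : ℤ → ℝ} (hh : Summable h) (hb : ∀ i, |g i| ≤ h i) :
    |∑' i, g i| ≤ ∑' i, h i := by
  have hgabs : Summable (fun i => |g i|) :=
    Summable.of_nonneg_of_le (fun i => abs_nonneg _) hb hh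
  have hgabs' : Summable (fun i => ‖g i‖) := by simpa [Real.norm_eq_abs] using hgabs
  have h1 : ‖∑' i, g i‖ ≤ ∑' i, ‖g i‖ := norm_tsum_le_tsum_norm hgabs'
  simp only [Real.norm_eq_abs] at h1
  exact h1.trans (Summable.tsum_le_tsum hb hgabs hh)

lemma dcd_shift_summable (ζ : ℤ → ℝ) (hS : Summable ζ) (j : ℤ) :
    Summable (fun i => ζ (j - i)) := by
  have := ((Equiv.subLeft j).summable_iff (f := ζ)).mpr hS
  simpa [Function.comp_def] using this

lemma dcd_shift_tsum (ζ : ℤ → ℝ) (j : ℤ) : ∑' i, ζ (j - i) = ∑' i, ζ i := by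
  simpa using (Equiv.subLeft j).tsum_eq ζ

/-- One decimation step: boundedness and difference bound. -/
lemma dcd_decim_step (ζ cc : ℤ → ℝ) (Sζ : Summable (fun i => |ζ i|))
    (M : ℝ) (hM0 : 0 ≤ M) (hMb : ∀ j, |cc j| ≤ M)
    (Bc : ℝ) (hdiff : ∀ j : ℤ, |cc (j+1) - cc j| ≤ Bc) :
    (∀ j, |decim ζ cc j| ≤ (∑' i, |ζ i|) * M) ∧
    (∀ j : ℤ, |decim ζ cc (j+1) - decim ζ cc j| ≤ (∑' i, |ζ i|) * (2 * Bc)) := by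
  have Sζ' : Summable ζ := dcd_summable_of_abs Sζ
  have shiftabs : ∀ j : ℤ, Summable (fun i => |ζ (j - i)|) := fun j =>
    dcd_shift_summable (fun n => |ζ n|) Sζ j
  have shiftabs_tsum : ∀ j : ℤ, ∑' i, |ζ (j - i)| = ∑' i, |ζ i| := fun j =>
    dcd_shift_tsum (fun n => |ζ n|) j
  have hSg : ∀ (j : ℤ) (e : ℤ → ℤ), Summable (fun i => ζ (j - i) * cc (e i)) := by
    intro j e
    apply dcd_summable_of_abs
    apply Summable.of_nonneg_of_le (fun i => abs_nonneg _) ?_ ((shiftabs j).mul_right M)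
    intro i
    rw [abs_mul]
    exact mul_le_mul_of_nonneg_left (hMb _) (abs_nonneg _)
  constructor
  · intro j
    have hb : ∀ i, |ζ (j - i) * cc (2 * i)| ≤ |ζ (j - i)| * M := by
      intro i; rw [abs_mul]
      exact mul_le_mul_of_nonneg_left (hMb _) (abs_nonneg _)
    have := dcd_abs_tsum_le ((shiftabs j).mul_right M) hb
    calc |decim ζ cc j| ≤ ∑' i, |ζ (j - i)| * M := this
      _ = (∑' i, |ζ (j - i)|) * M := tsum_mul_right
      _ = (∑' i, |ζ i|) * M := by rw [shiftabs_tsum]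
  · intro j
    have e1 : decim ζ cc (j+1) = ∑' i, ζ (j - i) * cc (2 * i + 2) := by
      have := (Equiv.addRight (1:ℤ)).tsum_eq (fun i => ζ (j + 1 - i) * cc (2 * i))
      rw [show decim ζ cc (j+1) = ∑' i, ζ (j + 1 - i) * cc (2 * i) from rfl, ← this]
      apply tsum_congr
      intro i
      simp only [Equiv.coe_addRight]
      have e2 : j + 1 - (i + 1) = j - i := by ring
      have e3 : 2 * (i + 1) = 2 * i + 2 := by ring
      rw [e2, e3]
    have e4 : decim ζ cc (j+1) - decim ζ cc j
        = ∑' i, ζ (j - i) * (cc (2 * i + 2) - cc (2 * i)) := by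
      rw [e1, show decim ζ cc j = ∑' i, ζ (j - i) * cc (2 * i) from rfl,
        ← Summable.tsum_sub (hSg j (fun i => 2 * i + 2)) (hSg j (fun i => 2 * i))]
      apply tsum_congr; intro i; ring
    rw [e4]
    have hb : ∀ i, |ζ (j - i) * (cc (2 * i + 2) - cc (2 * i))| ≤ |ζ (j - i)| * (2 * Bc) := by
      intro i
      rw [abs_mul]
      apply mul_le_mul_of_nonneg_left ?_ (abs_nonneg _)
      calc |cc (2*i+2) - cc (2*i)|
          ≤ |cc (2*i+2) - cc (2*i+1)| + |cc (2*i+1) - cc (2*i)| := abs_sub_le _ _ _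
        _ ≤ Bc + Bc := by
            have h1 := hdiff (2*i+1)
            have h2 := hdiff (2*i)
            have e5 : 2*i+1+1 = 2*i+2 := by ring
            rw [e5] at h1
            exact add_le_add h1 h2
        _ = 2 * Bc := by ring
    calc |∑' i, ζ (j - i) * (cc (2 * i + 2) - cc (2 * i))|
        ≤ ∑' i, |ζ (j - i)| * (2 * Bc) :=
          dcd_abs_tsum_le ((shiftabs j).mul_right _) hb
      _ = (∑' i, |ζ (j - i)|) * (2 * Bc) := tsum_mul_right
      _ = (∑' i, |ζ i|) * (2 * Bc) := by rw [shiftabs_tsum]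

set_option maxHeartbeats 2000000 in
/-- Decay of the detail coefficients of the nonstationary multiscale transform. -/
theorem detail_coefficients_decay
    (f : ℝ → ℝ)
    (hf_diff : Differentiable ℝ f)
    (hf_bdd : ∃ M : ℝ, ∀ x : ℝ, |f x| ≤ M)
    (hf'_bdd : ∃ M : ℝ, ∀ x : ℝ, |deriv f x| ≤ M)
    (J : ℕ)
    (α ζ : ℕ → ℤ → ℝ)
    (hα_fin : ∀ ℓ : ℕ, 1 ≤ ℓ → ℓ ≤ J → (Function.support (α ℓ)).Finite)
    (hα_even : ∀ ℓ : ℕ, 1 ≤ ℓ → ℓ ≤ J → ∑' i : ℤ, α ℓ (2 * i) = 1)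
    (hα_odd : ∀ ℓ : ℕ, 1 ≤ ℓ → ℓ ≤ J → ∑' i : ℤ, α ℓ (2 * i + 1) = 1)
    (hζ_sum : ∀ ℓ : ℕ, 1 ≤ ℓ → ℓ ≤ J → Summable (fun i => |ζ ℓ i|))
    (hζ_one : ∀ ℓ : ℕ, 1 ≤ ℓ → ℓ ≤ J → ∑' i : ℤ, ζ ℓ i = 1)
    (hKζ : ∀ ℓ : ℕ, 1 ≤ ℓ → ℓ ≤ J → Summable (fun i : ℤ => |ζ ℓ i| * |(i : ℝ)|))
    (c d : ℕ → ℤ → ℝ)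
    (hcJ : ∀ j : ℤ, c J j = f ((2 : ℝ) ^ (-(J : ℤ)) * (j : ℝ)))
    (hc_rec : ∀ ℓ : ℕ, 1 ≤ ℓ → ℓ ≤ J → c (ℓ - 1) = decim (ζ ℓ) (c ℓ))
    (hd_def : ∀ ℓ : ℕ, 1 ≤ ℓ → ℓ ≤ J →
      d ℓ = fun k => c ℓ k - subdiv (α ℓ) (c (ℓ - 1)) k) :
    ∀ ℓ : ℕ, 1 ≤ ℓ → ℓ ≤ J →
      supNorm (d ℓ) ≤
        ((Kc (ζ ℓ) * l1Norm (α ℓ) + Kc (α ℓ) * l1Norm (ζ ℓ)) *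
            (⨆ x : ℝ, |deriv f x|) * (l1Norm (ζ ℓ))⁻¹ *
            ∏ m ∈ Finset.Icc ℓ J, l1Norm (ζ m)) *
          (2 : ℝ) ^ (-(ℓ : ℤ)) := by
  intro ℓ hℓ1 hℓJ
  obtain ⟨Mf', hMf'⟩ := hf'_bdd
  set F := ⨆ x : ℝ, |deriv f x| with hF
  have hFbdd : BddAbove (Set.range fun x => |deriv f x|) :=
    ⟨Mf', by rintro y ⟨x, rfl⟩; exact hMf' x⟩
  have hFle : ∀ x, |deriv f x| ≤ F := fun x => le_ciSup hFbdd x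
  have hF0 : 0 ≤ F := le_trans (abs_nonneg _) (hFle 0)
  have hlip : ∀ x y : ℝ, |f x - f y| ≤ F * |x - y| := by
    intro x y
    have := Convex.norm_image_sub_le_of_norm_deriv_le (f := f) (C := F) (s := Set.univ)
      (fun z _ => hf_diff z) (fun z _ => by rw [Real.norm_eq_abs]; exact hFle z)
      convex_univ (Set.mem_univ y) (Set.mem_univ x)
    simpa [Real.norm_eq_abs] using this
  have hl1nonneg : ∀ (g : ℤ → ℝ), 0 ≤ l1Norm g := fun g =>
    tsum_nonneg (fun i => abs_nonneg _)
  -- the difference-bound quantity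
  set BB : ℕ → ℝ := fun m =>
    F * (∏ k ∈ Finset.Icc (m+1) J, l1Norm (ζ k)) * (2:ℝ) ^ (-(m:ℤ)) with hBB
  have hBBnonneg : ∀ m, 0 ≤ BB m := by
    intro m
    apply mul_nonneg (mul_nonneg hF0 (Finset.prod_nonneg (fun k _ => hl1nonneg (ζ k))))
    positivity
  -- key downward induction
  have key : ∀ n : ℕ, ∀ m : ℕ, m + n = J →
      (∃ M, 0 ≤ M ∧ ∀ j, |c m j| ≤ M) ∧ (∀ j : ℤ, |c m (j+1) - c m j| ≤ BB m) := by
    intro n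
    induction n with
    | zero =>
      intro m hm
      have hmJ : m = J := by omega
      rw [hmJ]
      obtain ⟨M, hM⟩ := hf_bdd
      constructor
      · exact ⟨M, le_trans (abs_nonneg _) (hM 0), fun j => by rw [hcJ]; exact hM _⟩
      · intro j
        rw [hcJ, hcJ]
        have h1 := hlip ((2:ℝ) ^ (-(J:ℤ)) * ((j+1 : ℤ) : ℝ)) ((2:ℝ) ^ (-(J:ℤ)) * (j : ℝ))
        have e1 : |(2:ℝ) ^ (-(J:ℤ)) * ((j+1 : ℤ) : ℝ) - (2:ℝ) ^ (-(J:ℤ)) * (j : ℝ)|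
            = (2:ℝ) ^ (-(J:ℤ)) := by
          push_cast
          rw [show (2:ℝ) ^ (-(J:ℤ)) * ((j:ℝ)+1) - (2:ℝ) ^ (-(J:ℤ)) * (j:ℝ)
              = (2:ℝ) ^ (-(J:ℤ)) by ring]
          exact abs_of_pos (by positivity)
        rw [e1] at h1
        refine h1.trans_eq ?_
        simp only [hBB]
        rw [Finset.Icc_eq_empty (by omega), Finset.prod_empty, mul_one]
    | succ n ih =>
      intro m hm
      have hm1 : (m+1) + n = J := by omega
      obtain ⟨⟨M, hM0, hMb⟩, hdiff⟩ := ih (m+1) hm1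
      have h1le : 1 ≤ m+1 := Nat.succ_le_succ (Nat.zero_le m)
      have hle : m+1 ≤ J := by omega
      have hrec : c m = decim (ζ (m+1)) (c (m+1)) := by
        have := hc_rec (m+1) h1le hle
        simpa using this
      have Sζ : Summable (fun i => |ζ (m+1) i|) := hζ_sum _ h1le hle
      obtain ⟨hbd, hdf⟩ := dcd_decim_step (ζ (m+1)) (c (m+1)) Sζ M hM0 hMb (BB (m+1)) hdiff
      constructor
      · refine ⟨(∑' i, |ζ (m+1) i|) * M,
          mul_nonneg (tsum_nonneg (fun i => abs_nonneg _)) hM0, ?_⟩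
        intro j; rw [hrec]; exact hbd j
      · intro j
        rw [hrec]
        refine (hdf j).trans_eq ?_
        simp only [hBB]
        have hprod : ∏ k ∈ Finset.Icc (m+1) J, l1Norm (ζ k)
            = l1Norm (ζ (m+1)) * ∏ k ∈ Finset.Icc (m+1+1) J, l1Norm (ζ k) := by
          rw [show Finset.Icc (m+1) J = insert (m+1) (Finset.Icc (m+1+1) J) by
            ext x; simp only [Finset.mem_Icc, Finset.mem_insert]; omega]
          rw [Finset.prod_insert (by simp only [Finset.mem_Icc]; omega)]
        have hpow : (2:ℝ) ^ (-(m:ℤ)) = 2 * (2:ℝ) ^ (-((m+1:ℕ):ℤ)) := by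
          have e : (-(m:ℤ)) = 1 + -((m+1:ℕ):ℤ) := by push_cast; ring
          rw [e, zpow_add₀ (two_ne_zero), zpow_one]
        rw [hprod, hpow,
          show l1Norm (ζ (m+1)) = ∑' i, |ζ (m+1) i| from rfl]
        ring
  -- instantiate at level ℓ
  obtain ⟨⟨M, hM0, hMb⟩, hdiff⟩ := key (J - ℓ) ℓ (by omega)
  set A := (hα_fin ℓ hℓ1 hℓJ).toFinset with hA
  have hAmem : ∀ m, α ℓ m ≠ 0 → m ∈ A := fun m hm => (Set.Finite.mem_toFinset _).mpr hm
  have hA0 : ∀ m ∉ A, α ℓ m = 0 := by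
    intro m hm; by_contra hc'; exact hm (hAmem m hc')
  have Sζ : Summable (fun i => |ζ ℓ i|) := hζ_sum ℓ hℓ1 hℓJ
  have Sζ' : Summable (ζ ℓ) := dcd_summable_of_abs Sζ
  have SK : Summable (fun i : ℤ => |ζ ℓ i| * |(i:ℝ)|) := hKζ ℓ hℓ1 hℓJ
  have hL1 : 1 ≤ l1Norm (ζ ℓ) := by
    have h1 := dcd_abs_tsum_le (g := ζ ℓ) (h := fun i => |ζ ℓ i|) Sζ (fun i => le_refl _)
    rw [hζ_one ℓ hℓ1 hℓJ, abs_one] at h1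
    exact h1
  have hL0 : (0:ℝ) < l1Norm (ζ ℓ) := lt_of_lt_of_le one_pos hL1
  have hKζ0 : 0 ≤ Kc (ζ ℓ) :=
    mul_nonneg (by norm_num) (tsum_nonneg (fun i => mul_nonneg (abs_nonneg _) (abs_nonneg _)))
  have hKα0 : 0 ≤ Kc (α ℓ) :=
    mul_nonneg (by norm_num) (tsum_nonneg (fun i => mul_nonneg (abs_nonneg _) (abs_nonneg _)))
  -- shifted facts
  have hζshift : ∀ i : ℤ, ∑' k, ζ ℓ (i - k) = 1 := fun i => by
    rw [dcd_shift_tsum, hζ_one ℓ hℓ1 hℓJ]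
  have hζshiftS : ∀ i : ℤ, Summable (fun k => ζ ℓ (i - k)) := fun i =>
    dcd_shift_summable _ Sζ' i
  have hζabsshiftS : ∀ i : ℤ, Summable (fun k => |ζ ℓ (i-k)|) := fun i =>
    dcd_shift_summable (fun n => |ζ ℓ n|) Sζ i
  have hζabsshift : ∀ i : ℤ, ∑' k, |ζ ℓ (i-k)| = l1Norm (ζ ℓ) := fun i =>
    dcd_shift_tsum (fun n => |ζ ℓ n|) i
  have hKshiftS : ∀ i : ℤ, Summable (fun k => |ζ ℓ (i-k)| * |((i - k : ℤ):ℝ)|) := fun i =>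
    dcd_shift_summable (fun n => |ζ ℓ n| * |(n:ℝ)|) SK i
  have hKshift : ∀ i : ℤ, ∑' k, |ζ ℓ (i-k)| * |((i-k:ℤ):ℝ)| = Kc (ζ ℓ) / 2 := by
    intro i
    have h1 := dcd_shift_tsum (fun n => |ζ ℓ n| * |(n:ℝ)|) i
    rw [h1, show Kc (ζ ℓ) = 2 * ∑' n : ℤ, |ζ ℓ n| * |(n:ℝ)| from rfl]
    ring
  -- subdivision weights sum to one
  have hαsum : ∀ j : ℤ, ∑' i : ℤ, α ℓ (j - 2 * i) = 1 := by
    intro j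
    rcases Int.even_or_odd j with ⟨m, hm⟩ | ⟨m, hm⟩
    · have e1 : (fun i : ℤ => α ℓ (j - 2 * i)) = fun i => α ℓ (2 * (m - i)) := by
        funext i; congr 1; omega
      rw [e1]
      have := (Equiv.subLeft m).tsum_eq (fun i : ℤ => α ℓ (2 * i))
      simpa using this.trans (hα_even ℓ hℓ1 hℓJ)
    · have e1 : (fun i : ℤ => α ℓ (j - 2 * i)) = fun i => α ℓ (2 * (m - i) + 1) := by
        funext i; congr 1; omega
      rw [e1]
      have := (Equiv.subLeft m).tsum_eq (fun i : ℤ => α ℓ (2 * i + 1))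
      simpa using this.trans (hα_odd ℓ hℓ1 hℓJ)
  -- inner summability
  have hSin : ∀ i : ℤ, Summable (fun k => ζ ℓ (i - k) * c ℓ (2 * k)) := by
    intro i
    apply dcd_summable_of_abs
    apply Summable.of_nonneg_of_le (fun k => abs_nonneg _) ?_ ((hζabsshiftS i).mul_right M)
    intro k
    rw [abs_mul]
    exact mul_le_mul_of_nonneg_left (hMb _) (abs_nonneg _)
  -- per-index inner estimate
  have hinner : ∀ (j i : ℤ),
      |c ℓ j - ∑' k, ζ ℓ (i - k) * c ℓ (2 * k)|
        ≤ (|((j - 2*i : ℤ):ℝ)| * l1Norm (ζ ℓ) + Kc (ζ ℓ)) * BB ℓ := by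
    intro j i
    have hc1 : (∑' k, ζ ℓ (i - k) * c ℓ j) = c ℓ j := by
      rw [tsum_mul_right, hζshift i, one_mul]
    have e : c ℓ j - ∑' k, ζ ℓ (i - k) * c ℓ (2 * k)
        = ∑' k, ζ ℓ (i - k) * (c ℓ j - c ℓ (2 * k)) := by
      rw [show (fun k => ζ ℓ (i - k) * (c ℓ j - c ℓ (2 * k)))
          = fun k => ζ ℓ (i - k) * c ℓ j - ζ ℓ (i - k) * c ℓ (2 * k) by
          funext k; ring]
      rw [Summable.tsum_sub ((hζshiftS i).mul_right _) (hSin i), hc1]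
    rw [e]
    set h : ℤ → ℝ := fun k => |ζ ℓ (i-k)| * (|((j - 2*i : ℤ):ℝ)| * BB ℓ)
      + (|ζ ℓ (i-k)| * |((i-k:ℤ):ℝ)|) * (2 * BB ℓ) with hh
    have hhS : Summable h :=
      ((hζabsshiftS i).mul_right _).add ((hKshiftS i).mul_right _)
    have hb : ∀ k, |ζ ℓ (i - k) * (c ℓ j - c ℓ (2 * k))| ≤ h k := by
      intro k
      rw [abs_mul]
      have h2 : |c ℓ j - c ℓ (2*k)|
          ≤ (|((j - 2*i : ℤ):ℝ)| + 2 * |((i-k:ℤ):ℝ)|) * BB ℓ := by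
        have ht := dcd_tele (c ℓ) (BB ℓ) hdiff j (2*k)
        refine ht.trans ?_
        apply mul_le_mul_of_nonneg_right ?_ (hBBnonneg ℓ)
        push_cast
        rw [show (j:ℝ) - 2*(k:ℝ) = ((j:ℝ) - 2*(i:ℝ)) + 2*((i:ℝ) - (k:ℝ)) by ring]
        refine (abs_add_le _ _).trans ?_
        rw [abs_mul, abs_two]
      calc |ζ ℓ (i-k)| * |c ℓ j - c ℓ (2*k)|
          ≤ |ζ ℓ (i-k)| * ((|((j - 2*i : ℤ):ℝ)| + 2 * |((i-k:ℤ):ℝ)|) * BB ℓ) :=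
            mul_le_mul_of_nonneg_left h2 (abs_nonneg _)
        _ = h k := by rw [hh]; push_cast; ring
    refine (dcd_abs_tsum_le hhS hb).trans_eq ?_
    rw [hh]
    rw [Summable.tsum_add ((hζabsshiftS i).mul_right _) ((hKshiftS i).mul_right _),
      tsum_mul_right, tsum_mul_right, hζabsshift i, hKshift i]
    ring
  -- pointwise bound on d ℓ
  set KK := Kc (ζ ℓ) * l1Norm (α ℓ) + Kc (α ℓ) * l1Norm (ζ ℓ) with hKK
  have hdj : ∀ j : ℤ, |d ℓ j| ≤ KK * BB ℓ := by
    intro j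
    rw [hd_def ℓ hℓ1 hℓJ]
    simp only []
    rw [hc_rec ℓ hℓ1 hℓJ]
    rw [show subdiv (α ℓ) (decim (ζ ℓ) (c ℓ)) j
        = ∑' i, α ℓ (j - 2*i) * (∑' k, ζ ℓ (i - k) * c ℓ (2 * k)) from rfl]
    set s : Finset ℤ := A.image (fun a => (j - a) / 2) with hs
    have hmem : ∀ i : ℤ, α ℓ (j - 2*i) ≠ 0 → i ∈ s := by
      intro i hi
      refine Finset.mem_image.mpr ⟨j - 2*i, hAmem _ hi, ?_⟩
      rw [show j - (j - 2*i) = 2*i by ring]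
      exact Int.mul_ediv_cancel_left i two_ne_zero
    have htsum_s : ∀ g : ℤ → ℝ,
        ∑' i, α ℓ (j - 2*i) * g i = ∑ i ∈ s, α ℓ (j - 2*i) * g i := by
      intro g
      apply tsum_eq_sum
      intro i hi
      by_cases hα0 : α ℓ (j - 2*i) = 0
      · rw [hα0, zero_mul]
      · exact absurd (hmem i hα0) hi
    have hws : ∑ i ∈ s, α ℓ (j - 2*i) = 1 := by
      have h1 : ∑' i, α ℓ (j - 2*i) = ∑ i ∈ s, α ℓ (j - 2*i) := by
        apply tsum_eq_sum
        intro i hi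
        by_contra hα0
        exact hi (hmem i hα0)
      rw [← h1, hαsum j]
    -- generic finite-sum bound
    have hgen : ∀ h : ℤ → ℝ, (∀ m, 0 ≤ h m) → (∀ m, α ℓ m = 0 → h m = 0) →
        ∑ i ∈ s, h (j - 2*i) ≤ ∑ m ∈ A, h m := by
      intro h h0 hz
      have himg : ∑ i ∈ s, h (j - 2*i)
          = ∑ m ∈ s.image (fun i : ℤ => j - 2*i), h m :=
        (Finset.sum_image (by intro x _ y _ hxy; have h' : j - 2*x = j - 2*y := hxy; omega)).symm
      rw [himg]
      calc ∑ m ∈ s.image (fun i : ℤ => j - 2*i), h m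
          ≤ ∑ m ∈ s.image (fun i : ℤ => j - 2*i) ∪ A, h m :=
            Finset.sum_le_sum_of_subset_of_nonneg Finset.subset_union_left
              (fun m _ _ => h0 m)
        _ = ∑ m ∈ A, h m := by
            refine (Finset.sum_subset Finset.subset_union_right ?_).symm
            intro m _ hm
            exact hz m (hA0 m hm)
    have hAl1 : ∑ m ∈ A, |α ℓ m| = l1Norm (α ℓ) :=
      (tsum_eq_sum (fun m hm => by rw [hA0 m hm, abs_zero])).symm
    have hAK : ∑ m ∈ A, |α ℓ m| * |(m:ℝ)| = Kc (α ℓ) / 2 := by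
      have h1 : ∑' m : ℤ, |α ℓ m| * |(m:ℝ)| = ∑ m ∈ A, |α ℓ m| * |(m:ℝ)| :=
        tsum_eq_sum (fun m hm => by rw [hA0 m hm, abs_zero, zero_mul])
      rw [← h1, show Kc (α ℓ) = 2 * ∑' m : ℤ, |α ℓ m| * |(m:ℝ)| from rfl]
      ring
    have hABl1 : ∑ i ∈ s, |α ℓ (j - 2*i)| ≤ l1Norm (α ℓ) := by
      refine (hgen (fun m => |α ℓ m|) (fun m => abs_nonneg _)
        (fun m hm => by simp [hm])).trans_eq hAl1
    have hABK : ∑ i ∈ s, |α ℓ (j - 2*i)| * |((j - 2*i : ℤ):ℝ)| ≤ Kc (α ℓ) / 2 := by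
      refine (hgen (fun m => |α ℓ m| * |(m:ℝ)|)
        (fun m => mul_nonneg (abs_nonneg _) (abs_nonneg _))
        (fun m hm => by simp [hm])).trans_eq hAK
    rw [htsum_s (fun i => ∑' k, ζ ℓ (i - k) * c ℓ (2 * k))]
    have e2 : c ℓ j - ∑ i ∈ s, α ℓ (j - 2*i) * (∑' k, ζ ℓ (i - k) * c ℓ (2 * k))
        = ∑ i ∈ s, α ℓ (j - 2*i) * (c ℓ j - ∑' k, ζ ℓ (i - k) * c ℓ (2 * k)) := by
      rw [show (fun i => α ℓ (j - 2*i) * (c ℓ j - ∑' k, ζ ℓ (i - k) * c ℓ (2 * k)))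
          = fun i => α ℓ (j - 2*i) * c ℓ j
            - α ℓ (j - 2*i) * (∑' k, ζ ℓ (i - k) * c ℓ (2 * k)) by funext i; ring]
      rw [Finset.sum_sub_distrib, ← Finset.sum_mul, hws, one_mul]
    rw [e2]
    calc |∑ i ∈ s, α ℓ (j - 2*i) * (c ℓ j - ∑' k, ζ ℓ (i - k) * c ℓ (2 * k))|
        ≤ ∑ i ∈ s, |α ℓ (j - 2*i) * (c ℓ j - ∑' k, ζ ℓ (i - k) * c ℓ (2 * k))| :=
          Finset.abs_sum_le_sum_abs _ _
      _ ≤ ∑ i ∈ s, |α ℓ (j - 2*i)| *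
            ((|((j - 2*i : ℤ):ℝ)| * l1Norm (ζ ℓ) + Kc (ζ ℓ)) * BB ℓ) := by
          apply Finset.sum_le_sum
          intro i _
          rw [abs_mul]
          exact mul_le_mul_of_nonneg_left (hinner j i) (abs_nonneg _)
      _ = (∑ i ∈ s, |α ℓ (j - 2*i)| * |((j - 2*i : ℤ):ℝ)|) * (l1Norm (ζ ℓ) * BB ℓ)
            + (∑ i ∈ s, |α ℓ (j - 2*i)|) * (Kc (ζ ℓ) * BB ℓ) := by
          rw [Finset.sum_mul, Finset.sum_mul, ← Finset.sum_add_distrib]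
          apply Finset.sum_congr rfl
          intro i _
          ring
      _ ≤ (Kc (α ℓ) / 2) * (l1Norm (ζ ℓ) * BB ℓ) + l1Norm (α ℓ) * (Kc (ζ ℓ) * BB ℓ) := by
          apply add_le_add
          · exact mul_le_mul_of_nonneg_right hABK
              (mul_nonneg (le_of_lt hL0) (hBBnonneg ℓ))
          · exact mul_le_mul_of_nonneg_right hABl1
              (mul_nonneg hKζ0 (hBBnonneg ℓ))
      _ ≤ KK * BB ℓ := by
          rw [hKK]
          have hx : 0 ≤ Kc (α ℓ) * (l1Norm (ζ ℓ) * BB ℓ) :=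
            mul_nonneg hKα0 (mul_nonneg (le_of_lt hL0) (hBBnonneg ℓ))
          nlinarith [hx]
  -- assemble
  have hsup : supNorm (d ℓ) ≤ KK * BB ℓ := ciSup_le hdj
  refine hsup.trans_eq ?_
  have hprod : ∏ m ∈ Finset.Icc ℓ J, l1Norm (ζ m)
      = l1Norm (ζ ℓ) * ∏ m ∈ Finset.Icc (ℓ+1) J, l1Norm (ζ m) := by
    rw [show Finset.Icc ℓ J = insert ℓ (Finset.Icc (ℓ+1) J) by
      ext x; simp only [Finset.mem_Icc, Finset.mem_insert]; omega]
    rw [Finset.prod_insert (by simp only [Finset.mem_Icc]; omega)]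
  rw [hprod, hBB, hKK]
  simp only []
  field_simp
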